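/- arXiv:0906.0385 — 4 statements merged into one kernel-verified Lean document; each statement's English description precedes it below -/
import Mathlib

section
/- For every integer i ≥ 1 and every number of variables n ≥ 1, all coefficients of the symmetric polynomial ∑_{j=0}^{i} e_j · h_{i−j} in ℤ[x_1,…,x_n] are even integers; equivalently, the polynomial P_i := (1/2)·∑_{j=0}^{i} e_j · h_{i−j}, a priori an element of ℚ[x_1,…,x_n], has all of its coefficients in ℤ (i.e., it lies in the image of the coefficient-inclusion map from MvPolynomial (Fin n) ℤ to MvPolynomial (Fin n) ℚ). -/
open MvPolynomial Finset

variable {σ : Type*} [Fintype σ] [DecidableEq σ]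
lemma perA (i : ℕ) (A : Finset σ) (hA : A.card ≤ i) :
    (∑ s : Sym σ (i - A.card), (((A.val + s.1).map (X : σ → MvPolynomial σ ℤ)).prod))
      = ∑ m ∈ Finset.univ.filter (fun m : Sym σ i => A.val ≤ m.1),
          ((m.1.map (X : σ → MvPolynomial σ ℤ)).prod) := by
  refine Finset.sum_bij' (fun s _ => (⟨A.val + s.1, by
      simp [Nat.add_sub_cancel' hA]⟩ : Sym σ i))
    (fun m hm => (⟨m.1 - A.val, by
      rw [Multiset.card_sub (Finset.mem_filter.mp hm).2]
      simp⟩ : Sym σ (i - A.card))) ?_ ?_ ?_ ?_ ?_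
  · intro s _
    exact Finset.mem_filter.mpr ⟨Finset.mem_univ _, Multiset.le_add_right _ _⟩
  · intro m _
    exact Finset.mem_univ _
  · intro s _
    ext : 1
    simp
  · intro m hm
    ext : 1
    simpa using (by rw [add_comm]; exact tsub_add_cancel_of_le (Finset.mem_filter.mp hm).2)
  · intro s _
    rfl

lemma expandEH (i j : ℕ) :
    esymm σ ℤ j * hsymm σ ℤ (i - j)
      = ∑ A ∈ Finset.powersetCard j Finset.univ, ∑ s : Sym σ (i - j),
          (((A.val + s.1).map (X : σ → MvPolynomial σ ℤ)).prod) := by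
  rw [esymm, hsymm, Finset.sum_mul_sum]
  refine Finset.sum_congr rfl fun A _ => Finset.sum_congr rfl fun s _ => ?_
  rw [Finset.prod_eq_multiset_prod, ← Multiset.prod_add, Multiset.map_add]

lemma powersetEq {i : ℕ} (m : Sym σ i) :
    Finset.univ.filter (fun A : Finset σ => A.val ≤ m.1) = m.1.toFinset.powerset := by
  ext A
  simp only [Finset.mem_filter, Finset.mem_univ, true_and, Finset.mem_powerset]
  rw [Multiset.le_iff_subset A.nodup]
  constructor
  · intro h a ha; exact Multiset.mem_toFinset.mpr (h (by simpa using ha))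
  · intro h a ha; exact Multiset.mem_toFinset.mp (h (by simpa using ha))

lemma key (i : ℕ) :
    ∑ j ∈ Finset.range (i + 1), esymm σ ℤ j * hsymm σ ℤ (i - j)
      = ∑ m : Sym σ i, (2 ^ m.1.toFinset.card) •
          ((m.1.map (X : σ → MvPolynomial σ ℤ)).prod) := by
  have step1 : ∑ j ∈ Finset.range (i + 1), esymm σ ℤ j * hsymm σ ℤ (i - j)
      = ∑ j ∈ Finset.range (i + 1), ∑ A ∈ Finset.powersetCard j Finset.univ,
          ∑ m ∈ Finset.univ.filter (fun m : Sym σ i => A.val ≤ m.1),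
            ((m.1.map (X : σ → MvPolynomial σ ℤ)).prod) := by
    refine Finset.sum_congr rfl fun j hj => ?_
    rw [expandEH]
    refine Finset.sum_congr rfl fun A hA => ?_
    have hcard : A.card = j := (Finset.mem_powersetCard.mp hA).2
    have hle : A.card ≤ i := by
      rw [hcard]; exact Nat.lt_succ_iff.mp (Finset.mem_range.mp hj)
    rw [← hcard]
    exact perA i A hle
  rw [step1]
  rw [← Finset.sum_biUnion ((Finset.univ : Finset σ).pairwise_disjoint_powersetCard.set_pairwise
    (Finset.range (i + 1) : Finset ℕ))]
  have hbU : (Finset.range (i + 1)).biUnion (fun j => Finset.powersetCard j (Finset.univ : Finset σ))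
      = Finset.univ.filter (fun A : Finset σ => A.card ≤ i) := by
    ext A
    simp only [Finset.mem_biUnion, Finset.mem_range, Finset.mem_powersetCard,
      Finset.mem_filter, Finset.mem_univ, true_and]
    constructor
    · rintro ⟨j, hj, _, rfl⟩; omega
    · intro h; exact ⟨A.card, by omega, Finset.subset_univ A, rfl⟩
  rw [hbU]
  have step2 : ∀ A : Finset σ, ¬ (A.card ≤ i) →
      (∑ m ∈ Finset.univ.filter (fun m : Sym σ i => A.val ≤ m.1),
        ((m.1.map (X : σ → MvPolynomial σ ℤ)).prod)) = 0 := by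
    intro A hA
    have : Finset.univ.filter (fun m : Sym σ i => A.val ≤ m.1) = ∅ := by
      rw [Finset.filter_eq_empty_iff]
      intro m _ hle
      exact hA (by simpa using Multiset.card_le_card hle)
    rw [this, Finset.sum_empty]
  rw [Finset.sum_filter_of_ne (fun A _ hne => by by_contra h; exact hne (step2 A h))]
  simp only [Finset.sum_filter]
  rw [Finset.sum_comm]
  refine Finset.sum_congr rfl fun m _ => ?_
  rw [← Finset.sum_filter, powersetEq, Finset.sum_const, Finset.card_powerset]

lemma key2 (i : ℕ) (hi : 1 ≤ i) :
    ∑ j ∈ Finset.range (i + 1), esymm σ ℤ j * hsymm σ ℤ (i - j)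
      = C 2 * ∑ m : Sym σ i, (2 ^ (m.1.toFinset.card - 1)) •
          ((m.1.map (X : σ → MvPolynomial σ ℤ)).prod) := by
  rw [key, Finset.mul_sum]
  refine Finset.sum_congr rfl fun m _ => ?_
  have hne : m.1 ≠ 0 := by
    intro h
    have := m.2
    rw [h] at this
    simp at this
    omega
  have hk : 1 ≤ m.1.toFinset.card :=
    Finset.card_pos.mpr (Multiset.toFinset_nonempty.mpr hne)
  calc (2 ^ m.1.toFinset.card) • ((m.1.map (X : σ → MvPolynomial σ ℤ)).prod)
      = (2 * 2 ^ (m.1.toFinset.card - 1)) • ((m.1.map (X : σ → MvPolynomial σ ℤ)).prod) := by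
        congr 1
        rw [← pow_succ']
        congr 1
        omega
    _ = 2 • ((2 ^ (m.1.toFinset.card - 1)) • ((m.1.map (X : σ → MvPolynomial σ ℤ)).prod)) :=
        mul_smul _ _ _
    _ = C 2 * ((2 ^ (m.1.toFinset.card - 1)) • ((m.1.map (X : σ → MvPolynomial σ ℤ)).prod)) := by
        rw [show (C 2 : MvPolynomial σ ℤ) = 2 from by simp, two_mul, two_smul]


/-- For every integer `i ≥ 1` and every number of variables `n ≥ 1`, all coefficients of the
symmetric polynomial `∑_{j=0}^{i} e_j * h_{i-j}` in `ℤ[x_1,…,x_n]` are even; equivalently, the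
polynomial `P_i = (1/2) * ∑_{j=0}^{i} e_j * h_{i-j}` in `ℚ[x_1,…,x_n]` lies in the image of the
coefficient inclusion `MvPolynomial (Fin n) ℤ → MvPolynomial (Fin n) ℚ`. -/
theorem stmt_0 (i n : ℕ) (hi : 1 ≤ i) (hn : 1 ≤ n) :
    (∀ d : Fin n →₀ ℕ,
      (2 : ℤ) ∣ MvPolynomial.coeff d
        (∑ j ∈ Finset.range (i + 1),
          esymm (Fin n) ℤ j * hsymm (Fin n) ℤ (i - j))) ∧
    (C (1/2 : ℚ) * ∑ j ∈ Finset.range (i + 1),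
        esymm (Fin n) ℚ j * hsymm (Fin n) ℚ (i - j)) ∈
      Set.range (MvPolynomial.map (Int.castRingHom ℚ)) := by
  set Q : MvPolynomial (Fin n) ℤ := ∑ m : Sym (Fin n) i, (2 ^ (m.1.toFinset.card - 1)) •
      ((m.1.map (X : Fin n → MvPolynomial (Fin n) ℤ)).prod) with hQ
  have hS := key2 (σ := Fin n) i hi
  rw [← hQ] at hS
  constructor
  · intro d
    exact ⟨coeff d Q, by rw [hS, coeff_C_mul]⟩
  · refine ⟨Q, ?_⟩
    have hmap : ∑ j ∈ Finset.range (i + 1), esymm (Fin n) ℚ j * hsymm (Fin n) ℚ (i - j)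
        = MvPolynomial.map (Int.castRingHom ℚ)
            (∑ j ∈ Finset.range (i + 1), esymm (Fin n) ℤ j * hsymm (Fin n) ℤ (i - j)) := by
      rw [map_sum]
      refine Finset.sum_congr rfl fun j _ => ?_
      rw [map_mul, map_esymm, map_hsymm]
    rw [hmap, hS, map_mul, MvPolynomial.map_C]
    rw [← mul_assoc, ← MvPolynomial.C_mul]
    norm_num
end

section
/- For every integer j ≥ 1 and every number of variables n ≥ 1, the element e_j − ((−1)^{j−1}/j)·p_j of MvPolynomial (Fin n) ℚ lies in the ℚ-subalgebra Algebra.adjoin ℚ {p_1, p_2, …, p_{j−1}} generated by the power sums of degree strictly less than j. (That is, when e_j is expressed as a polynomial in the power sum symmetric functions, p_j occurs with coefficient exactly (−1)^{j−1}/j.) -/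
open MvPolynomial Finset

/-- For every `j ≥ 1` and `n ≥ 1`, the element `e_j - ((-1)^(j-1)/j) * p_j` of
`MvPolynomial (Fin n) ℚ` lies in the `ℚ`-subalgebra generated by the power sums
`p_1, …, p_{j-1}` of degree strictly less than `j`. -/
theorem stmt_2 (j n : ℕ) (hj : 1 ≤ j) (hn : 1 ≤ n) :
    esymm (Fin n) ℚ j - C ((-1 : ℚ) ^ (j - 1) / (j : ℚ)) * psum (Fin n) ℚ j ∈
      Algebra.adjoin ℚ
        {q : MvPolynomial (Fin n) ℚ | ∃ k, 1 ≤ k ∧ k < j ∧ q = psum (Fin n) ℚ k} := by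
  induction j using Nat.strong_induction_on with
  | _ j ih =>
  set A := Algebra.adjoin ℚ
      {q : MvPolynomial (Fin n) ℚ | ∃ k, 1 ≤ k ∧ k < j ∧ q = psum (Fin n) ℚ k} with hA
  have h := mul_esymm_eq_sum (Fin n) ℚ j
  have hsplit : {a ∈ antidiagonal j | a.1 < j} =
      insert ((0 : ℕ), j) {a ∈ antidiagonal j | 0 < a.1 ∧ a.1 < j} := by
    ext a
    simp only [Finset.mem_filter, Finset.mem_insert, Finset.HasAntidiagonal.mem_antidiagonal, Prod.ext_iff]
    constructor
    · rintro ⟨hs, hlt⟩; rcases Nat.eq_zero_or_pos a.1 with h0 | h0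
      · left; omega
      · right; exact ⟨hs, h0, hlt⟩
    · rintro (⟨h1, h2⟩ | ⟨hs, h0, hlt⟩) <;> omega
  have hnot : ((0:ℕ), j) ∉ {a ∈ antidiagonal j | 0 < a.1 ∧ a.1 < j} := by simp
  rw [hsplit, Finset.sum_insert hnot] at h
  simp only [esymm_zero, pow_zero, one_mul] at h
  have hj0 : (j : ℚ) ≠ 0 := Nat.cast_ne_zero.mpr (by omega)
  have hC : (C (j : ℚ) : MvPolynomial (Fin n) ℚ) ≠ 0 := by
    simpa using hj0
  have hCc : (C (j : ℚ) : MvPolynomial (Fin n) ℚ) * C ((-1:ℚ)^(j-1)/(j:ℚ))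
      = C ((-1:ℚ)^(j-1)) := by
    rw [← C_mul]; congr 1; field_simp
  have hpow : ((-1 : MvPolynomial (Fin n) ℚ)) ^ (j+1) = C ((-1:ℚ)^(j-1)) := by
    rw [show ((-1 : MvPolynomial (Fin n) ℚ)) = C (-1:ℚ) by simp, ← C_pow]
    congr 1
    have h2 : j + 1 = (j-1) + 2 := by omega
    rw [h2, pow_add]
    simp
  rw [show ((j : MvPolynomial (Fin n) ℚ)) = C (j:ℚ) by simp] at h
  have he : esymm (Fin n) ℚ j = C ((-1:ℚ)^(j-1)/(j:ℚ)) *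
      (psum (Fin n) ℚ j +
        ∑ x ∈ {a ∈ antidiagonal j | 0 < a.1 ∧ a.1 < j},
          (-1) ^ x.1 * esymm (Fin n) ℚ x.1 * psum (Fin n) ℚ x.2) := by
    apply mul_left_cancel₀ hC
    rw [h, ← mul_assoc, hCc, hpow]
  have key : esymm (Fin n) ℚ j - C ((-1:ℚ)^(j-1)/(j:ℚ)) * psum (Fin n) ℚ j =
      C ((-1:ℚ)^(j-1)/(j:ℚ)) *
        ∑ x ∈ {a ∈ antidiagonal j | 0 < a.1 ∧ a.1 < j},
          (-1) ^ x.1 * esymm (Fin n) ℚ x.1 * psum (Fin n) ℚ x.2 := by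
    rw [he]; ring
  rw [key]
  have hCmem : ∀ c : ℚ, (C c : MvPolynomial (Fin n) ℚ) ∈ A := fun c => by
    rw [← MvPolynomial.algebraMap_eq]; exact A.algebraMap_mem c
  apply A.mul_mem (hCmem _)
  apply A.sum_mem
  intro x hx
  simp only [Finset.mem_filter, Finset.HasAntidiagonal.mem_antidiagonal] at hx
  obtain ⟨hsum, h0, hlt⟩ := hx
  have hp2 : psum (Fin n) ℚ x.2 ∈ A :=
    Algebra.subset_adjoin ⟨x.2, by omega, by omega, rfl⟩
  have hp1 : psum (Fin n) ℚ x.1 ∈ A :=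
    Algebra.subset_adjoin ⟨x.1, by omega, by omega, rfl⟩
  have he1 : esymm (Fin n) ℚ x.1 ∈ A := by
    have hd := ih x.1 hlt h0
    have hsub : (Algebra.adjoin ℚ
        {q : MvPolynomial (Fin n) ℚ | ∃ k, 1 ≤ k ∧ k < x.1 ∧ q = psum (Fin n) ℚ k})
        ≤ A := by
      apply Algebra.adjoin_mono
      rintro q ⟨k, hk1, hk2, rfl⟩
      exact ⟨k, hk1, by omega, rfl⟩
    have hdA : esymm (Fin n) ℚ x.1 - C ((-1:ℚ)^(x.1-1)/(x.1:ℚ)) * psum (Fin n) ℚ x.1 ∈ A :=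
      hsub hd
    have := A.add_mem hdA (A.mul_mem (hCmem ((-1:ℚ)^(x.1-1)/(x.1:ℚ))) hp1)
    simpa using this
  exact A.mul_mem (A.mul_mem (A.pow_mem (A.neg_mem A.one_mem) _) he1) hp2
end

section
/- For every odd integer i ≥ 1 and every number of variables n ≥ 1, the element P_i − (1/i)·p_i of MvPolynomial (Fin n) ℚ lies in the ℚ-subalgebra Algebra.adjoin ℚ {p_k : k odd, 1 ≤ k < i} generated by the odd-indexed power sums of degree strictly less than i. (That is, for odd i, the coefficient of p_i in the expansion of P_i as a polynomial in odd power sum symmetric functions is exactly 1/i.) -/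
open MvPolynomial Finset

set_option maxRecDepth 4000

namespace SchurAux

open PowerSeries

variable {R : Type*} [CommRing R]

noncomputable def geom (r : R) : R⟦X⟧ := PowerSeries.mk fun n => r ^ n

@[simp] lemma coeff_geom (r : R) (n : ℕ) : PowerSeries.coeff n (geom r) = r ^ n :=
  PowerSeries.coeff_mk _ _

lemma one_sub_mul_geom (r : R) : (1 - PowerSeries.C r * PowerSeries.X) * geom r = 1 := by
  ext n
  cases n with
  | zero => simp [geom]
  | succ n =>
    simp only [sub_mul, one_mul, map_sub, mul_assoc]
    rw [PowerSeries.coeff_C_mul, PowerSeries.coeff_succ_X_mul]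
    simp [pow_succ, mul_comm]

lemma one_add_mul_geom_neg (r : R) :
    (1 + PowerSeries.C r * PowerSeries.X) * geom (-r) = 1 := by
  have := one_sub_mul_geom (-r)
  simpa [sub_neg_eq_add] using this

lemma derivative_geom (r : R) :
    d⁄dX R (geom r) = PowerSeries.C r * (geom r * geom r) := by
  ext n
  rw [PowerSeries.coeff_derivative]
  rw [PowerSeries.coeff_C_mul, PowerSeries.coeff_mul]
  have : ∀ p ∈ antidiagonal n,
      (PowerSeries.coeff p.1 (geom r)) * (PowerSeries.coeff p.2 (geom r)) = r ^ n := by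
    intro p hp
    rw [coeff_geom, coeff_geom, ← pow_add, Finset.HasAntidiagonal.mem_antidiagonal.mp hp]
  rw [Finset.sum_congr rfl this, Finset.sum_const, Nat.card_antidiagonal]
  simp [pow_succ, nsmul_eq_mul]
  ring

/-- The factor `(1 + r t) / (1 - r t)` as a power series. -/
noncomputable def G (r : R) : R⟦X⟧ := (1 + PowerSeries.C r * PowerSeries.X) * geom r

lemma derivative_one_add_C_mul_X (r : R) :
    d⁄dX R (1 + PowerSeries.C r * PowerSeries.X) = PowerSeries.C r := by
  rw [map_add, Derivation.map_one_eq_zero]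
  have : d⁄dX R (PowerSeries.C r * PowerSeries.X) = PowerSeries.C r := by
    rw [Derivation.leibniz]
    simp [smul_eq_mul]
  simp [this]

lemma derivative_G (r : R) :
    d⁄dX R (G r) = G r * (PowerSeries.C r * (geom r + geom (-r))) := by
  rw [G, Derivation.leibniz, derivative_geom, derivative_one_add_C_mul_X]
  simp only [smul_eq_mul]
  have h1 : (1 + PowerSeries.C r * PowerSeries.X) * geom (-r) = 1 := one_add_mul_geom_neg r
  calc (1 + PowerSeries.C r * PowerSeries.X) * (PowerSeries.C r * (geom r * geom r))
        + geom r * PowerSeries.C r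
      = (1 + PowerSeries.C r * PowerSeries.X) * geom r * (PowerSeries.C r * geom r)
        + ((1 + PowerSeries.C r * PowerSeries.X) * geom (-r)) * (geom r * PowerSeries.C r) := by
        rw [h1]; ring
    _ = (1 + PowerSeries.C r * PowerSeries.X) * geom r
          * (PowerSeries.C r * (geom r + geom (-r))) := by ring

lemma derivative_prod_G {σ : Type*} [DecidableEq σ] (f : σ → R) (s : Finset σ) :
    d⁄dX R (∏ a ∈ s, G (f a)) =
      (∏ a ∈ s, G (f a)) * ∑ a ∈ s, PowerSeries.C (f a) * (geom (f a) + geom (-f a)) := by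
  induction s using Finset.induction_on with
  | empty => simp
  | insert a s ha ih =>
    rw [Finset.prod_insert ha, Finset.sum_insert ha, Derivation.leibniz, ih, derivative_G]
    simp only [smul_eq_mul]
    ring

lemma coeff_one_add_C_mul_X (r : R) (d : ℕ) :
    PowerSeries.coeff d (1 + PowerSeries.C r * PowerSeries.X) =
      if d = 0 then 1 else if d = 1 then r else 0 := by
  rw [map_add, PowerSeries.coeff_one, PowerSeries.coeff_C_mul, PowerSeries.coeff_X]
  rcases Nat.eq_zero_or_pos d with h | h
  · subst h; simp
  · rcases eq_or_ne d 1 with h1 | h1 <;> simp [h1, Nat.pos_iff_ne_zero.mp h]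

lemma esymm_cons (a : R) (s : Multiset R) (d : ℕ) :
    (a ::ₘ s).esymm (d + 1) = s.esymm (d + 1) + a * s.esymm d := by
  rw [Multiset.esymm, Multiset.powersetCard_cons, Multiset.map_add, Multiset.sum_add,
    Multiset.map_map]
  congr 1
  rw [Multiset.esymm, ← Multiset.sum_map_mul_left]
  apply congrArg
  apply Multiset.map_congr rfl
  intro t _
  simp

lemma coeff_multiset_prod_one_add (s : Multiset R) (d : ℕ) :
    PowerSeries.coeff d (s.map (fun r => 1 + PowerSeries.C r * PowerSeries.X)).prod
      = s.esymm d := by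
  induction s using Multiset.induction generalizing d with
  | empty =>
    rcases Nat.eq_zero_or_pos d with h | h
    · subst h; simp [Multiset.esymm]
    · have he : Multiset.powersetCard d (0 : Multiset R) = 0 :=
        Multiset.powersetCard_eq_empty d (by simpa using h)
      simp [Multiset.esymm, he, PowerSeries.coeff_one, Nat.pos_iff_ne_zero.mp h]
  | cons a s ih =>
    rw [Multiset.map_cons, Multiset.prod_cons]
    cases d with
    | zero =>
      rw [add_mul, one_mul, map_add]
      have h2 : PowerSeries.coeff 0 (PowerSeries.C a * PowerSeries.X *
          (s.map (fun r => 1 + PowerSeries.C r * PowerSeries.X)).prod) = 0 := by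
        rw [mul_assoc, PowerSeries.coeff_C_mul, PowerSeries.coeff_zero_X_mul, mul_zero]
      rw [h2, add_zero, ih 0]
      simp [Multiset.esymm, Multiset.powersetCard_zero_left]
    | succ d =>
      rw [add_mul, one_mul, map_add, mul_assoc, PowerSeries.coeff_C_mul,
        PowerSeries.coeff_succ_X_mul, ih, ih]
      rw [esymm_cons]

lemma coeff_prod_one_add_esymm {σ : Type*} [Fintype σ] [DecidableEq σ] (d : ℕ) :
    PowerSeries.coeff (R := MvPolynomial σ R) d
      (∏ a : σ, (1 + PowerSeries.C (MvPolynomial.X a) * PowerSeries.X)) = esymm σ R d := by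
  rw [esymm_eq_multiset_esymm, ← coeff_multiset_prod_one_add, Multiset.map_map,
    Finset.prod_eq_multiset_prod]
  rfl

lemma finsupp_sum_univ {σ : Type*} [Fintype σ] (l : σ →₀ ℕ) :
    ∑ i : σ, l i = l.sum fun _ x => x := by
  rw [Finsupp.sum_fintype]
  intro _; rfl

lemma prod_pow_eq_prod_toMultiset {σ : Type*} [Fintype σ] [DecidableEq σ] (l : σ →₀ ℕ) :
    (∏ i : σ, MvPolynomial.X (R := R) i ^ l i) = (l.toMultiset.map MvPolynomial.X).prod := by
  rw [Finset.prod_multiset_map_count]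
  rw [← Finset.prod_subset (Finset.subset_univ l.toMultiset.toFinset)]
  · apply Finset.prod_congr rfl
    intro i _
    rw [Finsupp.count_toMultiset]
  · intro i _ hi
    have : Multiset.count i l.toMultiset = 0 := by
      simpa [Multiset.count_eq_zero] using fun h => hi (Multiset.mem_toFinset.mpr h)
    rw [← Finsupp.count_toMultiset l i, this, pow_zero]

lemma coeff_prod_geom_hsymm {σ : Type*} [Fintype σ] [DecidableEq σ] (d : ℕ) :
    PowerSeries.coeff (R := MvPolynomial σ R) d (∏ a : σ, geom (MvPolynomial.X a)) = hsymm σ R d := by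
  rw [PowerSeries.coeff_prod]
  simp only [coeff_geom]
  rw [hsymm]
  refine Finset.sum_bij'
    (fun (l : σ →₀ ℕ) (hl : l ∈ finsuppAntidiag univ d) =>
      (⟨l.toMultiset, ?_⟩ : Sym σ d))
    (fun s _ => s.1.toFinsupp) ?_ ?_ ?_ ?_ ?_
  · rw [Finsupp.card_toMultiset]
    have := (Finset.mem_finsuppAntidiag.mp hl).1
    rw [← this, finsupp_sum_univ]
    rfl
  · intro a ha; exact Finset.mem_univ _
  · intro s _
    rw [Finset.mem_finsuppAntidiag]
    constructor
    · have h1 : Multiset.card (s.1.toFinsupp.toMultiset) = s.1.toFinsupp.sum fun _ x => x :=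
        Finsupp.card_toMultiset _
      rw [Multiset.toFinsupp_toMultiset, ← finsupp_sum_univ] at h1
      calc univ.sum ⇑(s.1.toFinsupp) = ∑ i : σ, s.1.toFinsupp i := rfl
        _ = Multiset.card s.1 := h1.symm
        _ = d := s.2
    · exact Finset.subset_univ _
  · intro l hl
    simp [Finsupp.toMultiset_toFinsupp]
  · intro s hs
    apply Subtype.ext
    simp [Multiset.toFinsupp_toMultiset]
  · intro l hl
    exact prod_pow_eq_prod_toMultiset l

section Main

variable {σ : Type*} [Fintype σ] [DecidableEq σ]

/-- The series `∏ (1 + x_a t)/(1 - x_a t)`. -/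
noncomputable def F (σ : Type*) [Fintype σ] (R : Type*) [CommRing R] :
    (MvPolynomial σ R)⟦X⟧ :=
  ∏ a : σ, G (MvPolynomial.X a)

lemma coeff_F (m : ℕ) :
    PowerSeries.coeff m (F σ R) =
      ∑ j ∈ Finset.range (m + 1), esymm σ R j * hsymm σ R (m - j) := by
  have : F σ R = (∏ a : σ, (1 + PowerSeries.C (MvPolynomial.X a) * PowerSeries.X))
      * ∏ a : σ, geom (MvPolynomial.X a) := by
    rw [F, ← Finset.prod_mul_distrib]
    rfl
  rw [this, PowerSeries.coeff_mul, Finset.Nat.sum_antidiagonal_eq_sum_range_succ_mk]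
  apply Finset.sum_congr rfl
  intro j _
  rw [coeff_prod_one_add_esymm, coeff_prod_geom_hsymm]

lemma coeff_T (k : ℕ) :
    PowerSeries.coeff (R := MvPolynomial σ R) k
      (∑ a : σ, PowerSeries.C (MvPolynomial.X a)
        * (geom (MvPolynomial.X a) + geom (-MvPolynomial.X a))) =
      (1 + (-1 : MvPolynomial σ R) ^ k) * psum σ R (k + 1) := by
  rw [map_sum]
  simp only [PowerSeries.coeff_C_mul, map_add, coeff_geom]
  rw [psum, Finset.mul_sum]
  apply Finset.sum_congr rfl
  intro a _
  rw [neg_pow]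
  ring

/-- The key recurrence. -/
lemma recurrence (m : ℕ) :
    ((m + 1 : ℕ) : MvPolynomial σ R) * PowerSeries.coeff (m + 1) (F σ R) =
      ∑ p ∈ antidiagonal m, PowerSeries.coeff p.1 (F σ R)
        * ((1 + (-1 : MvPolynomial σ R) ^ p.2) * psum σ R (p.2 + 1)) := by
  have hD := derivative_prod_G (R := MvPolynomial σ R) (MvPolynomial.X) Finset.univ
  have := congrArg (PowerSeries.coeff m) hD
  rw [PowerSeries.coeff_derivative, PowerSeries.coeff_mul] at this
  rw [mul_comm, ← Nat.cast_add_one] at this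
  rw [F]
  rw [this]
  apply Finset.sum_congr rfl
  intro p hp
  rw [coeff_T]

end Main



section Algebra

variable {n : ℕ} {i : ℕ}

lemma coeff_F_zero : PowerSeries.coeff 0 (F (Fin n) ℚ) = 1 := by
  rw [coeff_F]
  simp

/-- Every coefficient of `F` below `i` lies in the adjoin of small odd power sums. -/
lemma coeff_F_mem (i : ℕ) :
    ∀ m, m < i → PowerSeries.coeff m (F (Fin n) ℚ) ∈
      Algebra.adjoin ℚ
        {q : MvPolynomial (Fin n) ℚ |
          ∃ k, Odd k ∧ 1 ≤ k ∧ k < i ∧ q = psum (Fin n) ℚ k} := by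
  intro m
  induction m using Nat.strong_induction_on with
  | _ m ih =>
    intro hm
    set A := Algebra.adjoin ℚ
        {q : MvPolynomial (Fin n) ℚ |
          ∃ k, Odd k ∧ 1 ≤ k ∧ k < i ∧ q = psum (Fin n) ℚ k} with hA
    cases m with
    | zero => rw [coeff_F_zero]; exact one_mem A
    | succ m' =>
      have hrec := recurrence (σ := Fin n) (R := ℚ) m'
      have hS : ∑ p ∈ antidiagonal m', PowerSeries.coeff p.1 (F (Fin n) ℚ)
          * ((1 + (-1 : MvPolynomial (Fin n) ℚ) ^ p.2) * psum (Fin n) ℚ (p.2 + 1)) ∈ A := by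
        apply Subalgebra.sum_mem
        intro p hp
        have hpm := Finset.HasAntidiagonal.mem_antidiagonal.mp hp
        rcases Nat.even_or_odd p.2 with hv | hv
        · refine mul_mem ?_ (mul_mem ?_ ?_)
          · exact ih p.1 (by omega) (by omega)
          · rw [hv.neg_one_pow]
            exact add_mem (one_mem A) (one_mem A)
          · apply Algebra.subset_adjoin
            exact ⟨p.2 + 1, hv.add_one, by omega, by omega, rfl⟩
        · rw [hv.neg_one_pow]
          simpa using zero_mem A
      rw [← hrec] at hS
      have hcast : ((m' + 1 : ℕ) : MvPolynomial (Fin n) ℚ)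
          * PowerSeries.coeff (m' + 1) (F (Fin n) ℚ)
          = ((m' + 1 : ℚ)) • PowerSeries.coeff (m' + 1) (F (Fin n) ℚ) := by
        rw [MvPolynomial.smul_eq_C_mul]
        norm_cast
      rw [hcast] at hS
      have := Subalgebra.smul_mem A hS ((m' + 1 : ℚ))⁻¹
      rwa [inv_smul_smul₀ (by positivity) _] at this

end Algebra

end SchurAux

open SchurAux

/-- For every odd `i ≥ 1` and every `n ≥ 1`, the element `P_i - (1/i) * p_i`, where
`P_i = (1/2) * ∑_{j=0}^{i} e_j * h_{i-j}`, lies in the `ℚ`-subalgebra of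
`MvPolynomial (Fin n) ℚ` generated by the odd power sums `p_k`, `k` odd, `1 ≤ k < i`. -/
theorem stmt_4 (i n : ℕ) (hi : 1 ≤ i) (hodd : Odd i) (hn : 1 ≤ n) :
    (C (1/2 : ℚ) * ∑ j ∈ Finset.range (i + 1),
        esymm (Fin n) ℚ j * hsymm (Fin n) ℚ (i - j))
      - C (1 / (i : ℚ)) * psum (Fin n) ℚ i ∈
      Algebra.adjoin ℚ
        {q : MvPolynomial (Fin n) ℚ |
          ∃ k, Odd k ∧ 1 ≤ k ∧ k < i ∧ q = psum (Fin n) ℚ k} := by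
  classical
  obtain ⟨m', rfl⟩ : ∃ m', i = m' + 1 := ⟨i - 1, (Nat.succ_pred_eq_of_pos hi).symm⟩
  set i := m' + 1 with hidef
  set A := Algebra.adjoin ℚ
      {q : MvPolynomial (Fin n) ℚ |
        ∃ k, Odd k ∧ 1 ≤ k ∧ k < i ∧ q = psum (Fin n) ℚ k} with hA
  have hEven : Even m' := Nat.not_odd_iff_even.mp (Nat.odd_add_one.mp hodd)
  have hrec := recurrence (σ := Fin n) (R := ℚ) m'
  -- split off the (0, m') term
  have hmem0 : ((0 : ℕ), m') ∈ antidiagonal m' := by simp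
  rw [← Finset.add_sum_erase _ _ hmem0] at hrec
  rw [coeff_F_zero, hEven.neg_one_pow, one_mul] at hrec
  -- the remaining sum lies in A
  have hS' : ∑ p ∈ (antidiagonal m').erase (0, m'),
      PowerSeries.coeff p.1 (F (Fin n) ℚ)
        * ((1 + (-1 : MvPolynomial (Fin n) ℚ) ^ p.2) * psum (Fin n) ℚ (p.2 + 1)) ∈ A := by
    apply Subalgebra.sum_mem
    intro p hp
    have hpne := Finset.ne_of_mem_erase hp
    have hpm := Finset.HasAntidiagonal.mem_antidiagonal.mp (Finset.mem_of_mem_erase hp)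
    have hp2 : p.2 < m' := by
      rcases Nat.lt_or_ge p.2 m' with h | h
      · exact h
      · exfalso
        apply hpne
        have : p.2 = m' := by omega
        have h1 : p.1 = 0 := by omega
        rw [Prod.ext_iff]
        exact ⟨h1, this⟩
    rcases Nat.even_or_odd p.2 with hv | hv
    · refine mul_mem ?_ (mul_mem ?_ ?_)
      · exact coeff_F_mem i p.1 (by omega)
      · rw [hv.neg_one_pow]
        exact add_mem (one_mem A) (one_mem A)
      · apply Algebra.subset_adjoin
        exact ⟨p.2 + 1, hv.add_one, by omega, by omega, rfl⟩
    · rw [hv.neg_one_pow]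
      simpa using zero_mem A
  rw [← coeff_F]
  have hi0 : ((i : ℕ) : ℚ) ≠ 0 := Nat.cast_ne_zero.mpr (by omega)
  have key : MvPolynomial.C (1/2 : ℚ) * PowerSeries.coeff i (F (Fin n) ℚ)
      - MvPolynomial.C (1 / (i : ℚ)) * psum (Fin n) ℚ i
      = MvPolynomial.C ((1:ℚ)/(2*(i:ℚ))) * (((m' + 1 : ℕ) : MvPolynomial (Fin n) ℚ)
          * PowerSeries.coeff (m' + 1) (F (Fin n) ℚ)
          - (1 + 1) * psum (Fin n) ℚ (m' + 1)) := by
    have h1 : ((m' + 1 : ℕ) : MvPolynomial (Fin n) ℚ) = MvPolynomial.C (((m' + 1 : ℕ) : ℚ)) :=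
      (map_natCast MvPolynomial.C (m' + 1)).symm
    have h2 : (1 + 1 : MvPolynomial (Fin n) ℚ) = MvPolynomial.C (2 : ℚ) := by
      rw [map_ofNat]
      norm_num
    rw [h1, h2, mul_sub, ← mul_assoc, ← map_mul, ← mul_assoc, ← map_mul]
    have e1 : (1:ℚ)/(2*(i:ℚ)) * ((m' + 1 : ℕ) : ℚ) = 1/2 := by
      rw [hidef] at hi0 ⊢
      field_simp
    have e2 : (1:ℚ)/(2*(i:ℚ)) * 2 = 1 / (i:ℚ) := by
      rw [hidef] at hi0 ⊢
      field_simp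
    rw [e1, e2]
  rw [key]
  have hsub : ((m' + 1 : ℕ) : MvPolynomial (Fin n) ℚ)
      * PowerSeries.coeff (m' + 1) (F (Fin n) ℚ)
      - (1 + 1) * psum (Fin n) ℚ (m' + 1)
      = ∑ p ∈ (antidiagonal m').erase (0, m'),
        PowerSeries.coeff p.1 (F (Fin n) ℚ)
          * ((1 + (-1 : MvPolynomial (Fin n) ℚ) ^ p.2) * psum (Fin n) ℚ (p.2 + 1)) := by
    rw [hrec]
    ring
  rw [hsub]
  refine mul_mem ?_ hS'
  rw [← MvPolynomial.algebraMap_eq]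
  exact Subalgebra.algebraMap_mem A _
end

section
/- For every integer m ≥ 1 and every number of variables n ≥ 1, the ℚ-subalgebra of MvPolynomial (Fin n) ℚ generated by the one-row Schur P-functions P_1, P_3, P_5, …, P_{2m−1} equals the ℚ-subalgebra generated by the odd power sums p_1, p_3, p_5, …, p_{2m−1}; that is, Algebra.adjoin ℚ {P_1, P_3, …, P_{2m−1}} = Algebra.adjoin ℚ {p_1, p_3, …, p_{2m−1}}. -/
open MvPolynomial Finset
open PowerSeries hiding C

namespace SchurPAux

section general
variable {A : Type*} [CommRing A]

noncomputable def geom (a : A) : PowerSeries A := PowerSeries.mk fun j => a ^ j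

@[simp] lemma coeff_geom (a : A) (k : ℕ) : coeff k (geom a) = a ^ k := coeff_mk _ _

lemma one_sub_mul_geom (a : A) : (1 - PowerSeries.C a * PowerSeries.X) * geom a = 1 := by
  ext k
  rw [sub_mul, one_mul, map_sub]
  cases k with
  | zero => simp [geom]
  | succ k => simp [mul_assoc, coeff_succ_X_mul, geom, pow_succ']

lemma one_add_mul_geom_neg (a : A) : (1 + PowerSeries.C a * PowerSeries.X) * geom (-a) = 1 := by
  have := one_sub_mul_geom (-a)
  simpa [sub_neg_eq_add] using this

lemma rescale_neg_one_geom (a : A) : rescale (-1) (geom a) = geom (-a) := by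
  rw [geom, rescale_mk]
  ext k
  simp [geom, neg_pow a, mul_comm]

lemma rescale_neg_one_one_add (a : A) :
    rescale (-1) (1 + PowerSeries.C a * PowerSeries.X)
      = 1 - PowerSeries.C a * PowerSeries.X := by
  ext k
  rw [coeff_rescale]
  cases k with
  | zero => simp
  | succ k =>
    cases k with
    | zero => simp [PowerSeries.coeff_one]
    | succ k => simp [PowerSeries.coeff_one, PowerSeries.coeff_X, PowerSeries.coeff_C_mul]

lemma coeff_derivativeFun' (f : PowerSeries A) (n : ℕ) :
    coeff n (derivativeFun f) = coeff (n + 1) f * (n + 1) := coeff_derivative f n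

lemma derivativeFun_C' (r : A) : derivativeFun (PowerSeries.C r) = 0 := derivative_C

lemma derivativeFun_geom (a : A) :
    derivativeFun (geom a) = PowerSeries.C a * (geom a) ^ 2 := by
  ext k
  rw [coeff_derivativeFun', PowerSeries.coeff_C_mul, sq, PowerSeries.coeff_mul]
  have h : ∀ p ∈ antidiagonal k, coeff p.1 (geom a) * coeff p.2 (geom a) = a ^ k := by
    intro p hp
    rw [Finset.HasAntidiagonal.mem_antidiagonal] at hp
    simp [geom, ← pow_add, hp]
  rw [Finset.sum_congr rfl h, Finset.sum_const, Nat.card_antidiagonal]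
  simp only [geom, coeff_mk]
  ring

lemma derivativeFun_X : derivativeFun (PowerSeries.X : PowerSeries A) = 1 := by
  ext k
  rw [coeff_derivativeFun', PowerSeries.coeff_X, PowerSeries.coeff_one]
  cases k with
  | zero => simp
  | succ k => simp [Nat.succ_ne_zero]

lemma derivativeFun_one_add (a : A) :
    derivativeFun (1 + PowerSeries.C a * PowerSeries.X) = PowerSeries.C a := by
  rw [derivativeFun_add, derivativeFun_one, derivativeFun_mul, derivativeFun_X, derivativeFun_C']
  simp

lemma derivativeFun_factor (a : A) :
    derivativeFun ((1 + PowerSeries.C a * PowerSeries.X) * geom a)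
      = 2 * (PowerSeries.C a * (geom a) ^ 2) := by
  rw [derivativeFun_mul, derivativeFun_geom, derivativeFun_one_add]
  have h := one_sub_mul_geom a
  simp only [smul_eq_mul]
  linear_combination (-(PowerSeries.C a * geom a)) * h

lemma derivativeFun_prod {ι : Type*} [DecidableEq ι] (s : Finset ι) (f : ι → PowerSeries A) :
    derivativeFun (∏ i ∈ s, f i)
      = ∑ i ∈ s, (∏ j ∈ s.erase i, f j) * derivativeFun (f i) := by
  induction s using Finset.induction with
  | empty => simp [derivativeFun_one]
  | insert _ _ hni ih =>
    rename_i a s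
    rw [Finset.prod_insert hni, derivativeFun_mul, ih, Finset.sum_insert hni,
      Finset.erase_insert hni, smul_eq_mul, smul_eq_mul, add_comm]
    congr 1
    rw [Finset.mul_sum]
    refine Finset.sum_congr rfl fun i hi => ?_
    rw [Finset.erase_insert_of_ne (by rintro rfl; exact hni hi), Finset.prod_insert
      (fun h => hni (Finset.mem_of_mem_erase h))]
    ring

end general

lemma sum_range_neg_one_pow {A : Type*} [CommRing A] (k : ℕ) :
    ∑ i ∈ Finset.range (k + 1), (-1 : A) ^ i = if Even k then 1 else 0 := by
  induction k with
  | zero => simp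
  | succ k ih =>
    rw [Finset.sum_range_succ, ih]
    by_cases h : Even k
    · rw [if_pos h, if_neg (by simpa [Nat.even_add_one] using h), Odd.neg_one_pow]
      · ring
      · simpa [Nat.odd_add_one] using h
    · rw [if_neg h, if_pos (by simpa [Nat.even_add_one] using h), Even.neg_one_pow]
      · ring
      · simpa [Nat.even_add_one] using h

lemma geom_mul_geom_neg {A : Type*} [CommRing A] (a : A) (k : ℕ) :
    coeff k (geom a * geom (-a)) = if Even k then a ^ k else 0 := by
  rw [PowerSeries.coeff_mul]
  have h : ∀ p ∈ antidiagonal k, coeff p.1 (geom a) * coeff p.2 (geom (-a))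
      = (-1 : A) ^ p.2 * a ^ k := by
    intro p hp
    rw [Finset.HasAntidiagonal.mem_antidiagonal] at hp
    simp only [geom, coeff_mk, neg_pow a]
    rw [show a ^ p.1 * ((-1 : A) ^ p.2 * a ^ p.2) = (-1 : A) ^ p.2 * (a ^ p.1 * a ^ p.2) by ring,
      ← pow_add, hp]
  rw [Finset.sum_congr rfl h, ← Finset.sum_mul]
  have h2 : ∑ p ∈ antidiagonal k, (-1 : A) ^ p.2 = ∑ p ∈ antidiagonal k, (-1 : A) ^ p.1 := by
    rw [← Finset.Nat.sum_antidiagonal_swap]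
    rfl
  rw [h2, Finset.Nat.sum_antidiagonal_eq_sum_range_succ_mk, sum_range_neg_one_pow]
  split <;> simp




section nvars

variable (n : ℕ)
local notation "R" => MvPolynomial (Fin n) ℚ

lemma finsupp_sum_eq_sum_univ (f : Fin n →₀ ℕ) : f.sum (fun _ => id) = ∑ a, f a := by
  rw [Finsupp.sum_fintype]
  · rfl
  · intro; rfl

lemma coeff_H (d : ℕ) :
    coeff d (∏ i : Fin n, geom (X i : R)) = hsymm (Fin n) ℚ d := by
  rw [PowerSeries.coeff_prod, hsymm]
  refine Finset.sum_bij'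
    (i := fun l hl => (⟨Finsupp.toMultiset l, by
      rw [Finsupp.card_toMultiset, finsupp_sum_eq_sum_univ]
      rw [Finset.mem_finsuppAntidiag] at hl
      exact hl.1⟩ : Sym (Fin n) d))
    (j := fun s hs => Multiset.toFinsupp s.1)
    (fun l hl => Finset.mem_univ _)
    (fun s hs => ?_) (fun l hl => ?_) (fun s hs => ?_) (fun l hl => ?_)
  · rw [Finset.mem_finsuppAntidiag]
    refine ⟨?_, fun a _ => Finset.mem_univ a⟩
    have h := Multiset.toFinsupp_sum_eq s.1
    rw [finsupp_sum_eq_sum_univ] at h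
    rw [show (univ.sum ⇑(Multiset.toFinsupp (s.1)) : ℕ) = ∑ a, (Multiset.toFinsupp (s.1)) a from rfl, h, s.2]
  · ext a
    simp
  · ext a
    simp
  · -- value equality
    simp only [geom, coeff_mk]
    have h1 : (Multiset.map MvPolynomial.X (Finsupp.toMultiset l : Multiset (Fin n))).prod
        = ∏ a ∈ (Finsupp.toMultiset l).toFinset, (MvPolynomial.X a : R) ^ (Finsupp.toMultiset l).count a :=
      Finset.prod_multiset_map_count _ _
    simp only [Finsupp.count_toMultiset] at h1
    rw [h1]
    refine (Finset.prod_subset (Finset.subset_univ _) ?_).symm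
    intro i _ hni
    have : l i = 0 := by
      by_contra hzero
      exact hni (by simp [Multiset.mem_toFinset, Finsupp.mem_toMultiset, hzero])
    rw [this, pow_zero]



lemma coeff_E (d : ℕ) :
    coeff d (∏ i : Fin n, (1 + PowerSeries.C (X i) * PowerSeries.X)) = esymm (Fin n) ℚ d := by
  have h : ∀ i : Fin n,
      (1 + PowerSeries.C (X i : R) * PowerSeries.X) =
        (PowerSeries.C (X i) * PowerSeries.X + 1) := fun i => by ring
  simp_rw [h]
  rw [Finset.prod_add]
  have h2 : ∀ t : Finset (Fin n),
      ((∏ i ∈ t, PowerSeries.C (X i) * PowerSeries.X) * ∏ _i ∈ (univ : Finset (Fin n)) \ t, (1 : PowerSeries R))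
        = PowerSeries.C (∏ i ∈ t, X i) * PowerSeries.X ^ t.card := by
    intro t
    rw [Finset.prod_const_one, mul_one, Finset.prod_mul_distrib, Finset.prod_const, map_prod]
  simp_rw [h2]
  rw [map_sum]
  have h3 : ∀ t : Finset (Fin n),
      coeff d (PowerSeries.C (∏ i ∈ t, (X i : R)) * PowerSeries.X ^ t.card)
        = if t.card = d then (∏ i ∈ t, X i) else 0 := by
    intro t
    rw [PowerSeries.coeff_C_mul, PowerSeries.coeff_X_pow]
    by_cases hc : t.card = d
    · simp [hc]
    · rw [if_neg (fun hc2 => hc hc2.symm), if_neg hc, mul_zero]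
  simp_rw [h3]
  rw [Finset.sum_ite, Finset.sum_const_zero, add_zero, esymm]
  apply Finset.sum_congr
  · ext t
    simp [Finset.mem_powersetCard, Finset.mem_filter]
  · intros; rfl



noncomputable def Qs : PowerSeries R :=
  ∏ i : Fin n, ((1 + PowerSeries.C (X i) * PowerSeries.X) * geom (X i))

noncomputable def qq (k : ℕ) : R :=
  ∑ j ∈ Finset.range (k + 1), esymm (Fin n) ℚ j * hsymm (Fin n) ℚ (k - j)

lemma coeff_Qs (k : ℕ) : coeff k (Qs n) = qq n k := by
  rw [Qs, Finset.prod_mul_distrib, PowerSeries.coeff_mul, qq,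
    Finset.Nat.sum_antidiagonal_eq_sum_range_succ_mk]
  exact Finset.sum_congr rfl fun j hj => by rw [coeff_E, coeff_H]

lemma Qs_mul_rescale : Qs n * rescale (-1) (Qs n) = 1 := by
  rw [Qs, map_prod, ← Finset.prod_mul_distrib]
  rw [Finset.prod_eq_one]
  intro i _
  rw [map_mul, rescale_neg_one_geom, rescale_neg_one_one_add]
  calc (1 + PowerSeries.C (X i) * PowerSeries.X) * geom (X i : R) *
        ((1 - PowerSeries.C (X i) * PowerSeries.X) * geom (-(X i) : R))
      = ((1 - PowerSeries.C (X i) * PowerSeries.X) * geom (X i : R)) *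
        ((1 + PowerSeries.C (X i) * PowerSeries.X) * geom (-(X i) : R)) := by ring
    _ = 1 := by rw [one_sub_mul_geom, one_add_mul_geom_neg, one_mul]

lemma identity_B {k : ℕ} (hk : 0 < k) :
    ∑ p ∈ antidiagonal k, qq n p.1 * ((-1 : R) ^ p.2 * qq n p.2) = 0 := by
  have h := congrArg (coeff k) (Qs_mul_rescale n)
  rw [PowerSeries.coeff_mul, PowerSeries.coeff_one, if_neg hk.ne'] at h
  rw [← h]
  exact Finset.sum_congr rfl fun p hp => by
    rw [coeff_Qs, coeff_rescale, coeff_Qs]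



/-- the series `2 ∑_{a odd} p_a T^{a-1}` -/
noncomputable def Ss : PowerSeries R :=
  ∑ i : Fin n, 2 * (PowerSeries.C (X i) * (geom (X i) * geom (-(X i))))

lemma coeff_Ss (k : ℕ) :
    coeff k (Ss n) = if Even k then 2 * psum (Fin n) ℚ (k + 1) else 0 := by
  rw [Ss, map_sum]
  have h : ∀ i : Fin n, coeff k (2 * (PowerSeries.C (X i) * (geom (X i) * geom (-(X i)))))
      = if Even k then 2 * ((X i : R) ^ (k + 1)) else 0 := by
    intro i
    rw [show (2 : PowerSeries R) * (PowerSeries.C (X i) * (geom (X i) * geom (-(X i))))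
        = PowerSeries.C (2 * X i) * (geom (X i) * geom (-(X i))) by rw [map_mul, map_ofNat]; ring,
      PowerSeries.coeff_C_mul, geom_mul_geom_neg]
    split
    · ring
    · rw [mul_zero]
  rw [Finset.sum_congr rfl fun i _ => h i]
  split
  · rw [← Finset.mul_sum, psum]
  · exact Finset.sum_const_zero

lemma deriv_Qs : derivativeFun (Qs n) = Qs n * Ss n := by
  rw [Qs, derivativeFun_prod, Ss, Finset.mul_sum]
  refine Finset.sum_congr rfl fun i _ => ?_
  rw [derivativeFun_factor]
  rw [← Finset.mul_prod_erase univ _ (Finset.mem_univ i)]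
  have h := one_add_mul_geom_neg (X i : R)
  set G := geom (X i : R)
  set Gm := geom (-(X i) : R)
  set P := ∏ j ∈ univ.erase i, ((1 + PowerSeries.C (X j : R) * PowerSeries.X) * geom (X j))
  linear_combination (-(2 * PowerSeries.C (X i) * G * G * P)) * h

lemma identity_A (k : ℕ) :
    ((k + 1 : ℕ) : R) * qq n (k + 1) =
      ∑ p ∈ antidiagonal k, qq n p.1 *
        (if Even p.2 then 2 * psum (Fin n) ℚ (p.2 + 1) else 0) := by
  have h := congrArg (coeff k) (deriv_Qs n)
  rw [coeff_derivativeFun', PowerSeries.coeff_mul, coeff_Qs] at h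
  rw [show (((k + 1 : ℕ) : R) * qq n (k + 1)) = qq n (k + 1) * ((k : R) + 1) by push_cast; ring, h]
  exact Finset.sum_congr rfl fun p _ => by rw [coeff_Qs, coeff_Ss]



lemma qq_zero : qq n 0 = 1 := by
  simp [qq, esymm_zero, hsymm_zero]

lemma C_mul_mem {N : ℕ} {S : Subalgebra ℚ (MvPolynomial (Fin N) ℚ)} (r : ℚ)
    {x : MvPolynomial (Fin N) ℚ} (hx : x ∈ S) : C r * x ∈ S := by
  rw [← MvPolynomial.smul_eq_C_mul]
  exact S.smul_mem hx r


/-- the generating set of one-row Schur P functions -/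
def SP (m : ℕ) : Set R :=
  {q : R | ∃ k, Odd k ∧ 1 ≤ k ∧ k ≤ 2 * m - 1 ∧
      q = C (1/2 : ℚ) * ∑ j ∈ Finset.range (k + 1),
            esymm (Fin n) ℚ j * hsymm (Fin n) ℚ (k - j)}

/-- the generating set of odd power sums -/
def Spow (m : ℕ) : Set R :=
  {q : R | ∃ k, Odd k ∧ 1 ≤ k ∧ k ≤ 2 * m - 1 ∧ q = psum (Fin n) ℚ k}

lemma qq_mem_SP (m : ℕ) : ∀ k, k ≤ 2 * m - 1 → qq n k ∈ Algebra.adjoin ℚ (SP n m) := by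
  intro k
  induction k using Nat.strong_induction_on with
  | _ k ih =>
  intro hk
  rcases Nat.even_or_odd k with hev | hodd
  · rcases Nat.eq_zero_or_pos k with rfl | hpos
    · rw [qq_zero]; exact one_mem _
    · -- even, positive: use identity B
      have hB := identity_B n hpos
      have h0k : ((0 : ℕ), k) ∈ antidiagonal k := by simp
      rw [← Finset.add_sum_erase _ _ h0k] at hB
      have hk0 : ((k : ℕ), 0) ∈ (antidiagonal k).erase (0, k) := by
        simp [hpos.ne', Prod.ext_iff]
      rw [← Finset.add_sum_erase _ _ hk0] at hB
      simp only [qq_zero, one_mul, mul_one, pow_zero, hev.neg_one_pow] at hB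
      set s := ∑ p ∈ ((antidiagonal k).erase (0, k)).erase (k, 0),
        qq n p.1 * ((-1 : R) ^ p.2 * qq n p.2) with hs
      have hC2 : (C (2:ℚ) : R) = 2 := map_ofNat (MvPolynomial.C : ℚ →+* R) 2
      have h2 : (C (2:ℚ) : R) * qq n k = -s := by
        rw [hC2]; linear_combination hB
      have key : qq n k = C (-(1/2) : ℚ) * s := by
        have h1 : (C (-(1/2):ℚ) : R) * C (2:ℚ) = -1 := by
          rw [← C_mul]; norm_num
        linear_combination (-(C (-(1/2) : ℚ) : R)) * h2 + qq n k * h1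
      rw [key]
      apply C_mul_mem
      apply Subalgebra.sum_mem
      intro p hp
      have hpmem := Finset.mem_of_mem_erase (Finset.mem_of_mem_erase hp)
      rw [Finset.HasAntidiagonal.mem_antidiagonal] at hpmem
      have hp1 : p.1 < k := by
        rcases Nat.lt_or_ge p.1 k with h | h
        · exact h
        · exfalso
          have : p.1 = k := le_antisymm (by omega) h
          have : p = (k, 0) := by
            have := hpmem; apply Prod.ext <;> omega
          exact (Finset.notMem_erase _ _) (this ▸ hp)
      have hp2 : p.2 < k := by
        rcases Nat.lt_or_ge p.2 k with h | h
        · exact h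
        · exfalso
          have : p = (0, k) := by apply Prod.ext <;> omega
          exact (Finset.notMem_erase _ _)
            (this ▸ (Finset.mem_of_mem_erase hp))
      refine mul_mem (ih p.1 hp1 (by omega)) ?_
      rw [show ((-1 : R) ^ p.2) = C ((-1 : ℚ) ^ p.2) by rw [map_pow, map_neg, map_one]]
      exact C_mul_mem _ (ih p.2 hp2 (by omega))
  · -- odd: generator
    have h1k : 1 ≤ k := hodd.pos
    have hgen : C (1/2 : ℚ) * qq n k ∈ SP n m := ⟨k, hodd, h1k, hk, rfl⟩
    have : qq n k = C (2 : ℚ) * (C (1/2 : ℚ) * qq n k) := by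
      rw [← mul_assoc, ← C_mul]; norm_num
    rw [this]
    exact C_mul_mem _ (Algebra.subset_adjoin hgen)


lemma psum_mem_SP (m : ℕ) : ∀ k, Odd k → k ≤ 2 * m - 1 →
    psum (Fin n) ℚ k ∈ Algebra.adjoin ℚ (SP n m) := by
  intro k
  induction k using Nat.strong_induction_on with
  | _ k ih =>
  intro hodd hk
  have hpos := hodd.pos
  obtain ⟨k', rfl⟩ : ∃ k', k = k' + 1 := ⟨k - 1, by omega⟩
  have hev' : Even k' := by
    rcases hodd with ⟨t, ht⟩
    exact ⟨t, by omega⟩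
  have hA := identity_A n k'
  have h0k : ((0 : ℕ), k') ∈ antidiagonal k' := by simp
  rw [← Finset.add_sum_erase _ _ h0k] at hA
  have ht : qq n 0 * (if Even k' then 2 * psum (Fin n) ℚ (k' + 1) else 0)
      = 2 * psum (Fin n) ℚ (k' + 1) := by
    rw [qq_zero, one_mul, if_pos hev']
  rw [ht] at hA
  set s := ∑ p ∈ (antidiagonal k').erase (0, k'),
    qq n p.1 * (if Even p.2 then 2 * psum (Fin n) ℚ (p.2 + 1) else 0) with hs
  have h1 : (C (1/2 : ℚ) : R) * 2 = 1 := by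
    rw [← map_ofNat (MvPolynomial.C : ℚ →+* R) 2, ← C_mul]; norm_num
  have key : psum (Fin n) ℚ (k' + 1)
      = C (1/2 : ℚ) * (((k' + 1 : ℕ) : R) * qq n (k' + 1) - s) := by
    linear_combination (-(C (1/2 : ℚ) : R)) * hA - psum (Fin n) ℚ (k' + 1) * h1
  rw [key]
  apply C_mul_mem
  refine sub_mem ?_ ?_
  · rw [← map_natCast (MvPolynomial.C : ℚ →+* R) (k' + 1)]
    exact C_mul_mem _ (qq_mem_SP n m _ hk)
  · refine Subalgebra.sum_mem _ fun p hp => ?_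
    have hpmem := Finset.mem_of_mem_erase hp
    rw [Finset.HasAntidiagonal.mem_antidiagonal] at hpmem
    have hp2 : p.2 < k' := by
      rcases Nat.lt_or_ge p.2 k' with h | h
      · exact h
      · exfalso
        have : p = (0, k') := by apply Prod.ext <;> omega
        exact (Finset.notMem_erase _ _) (this ▸ hp)
    by_cases hpe : Even p.2
    · rw [if_pos hpe]
      refine mul_mem (qq_mem_SP n m _ (by omega)) ?_
      rw [show (2 : R) = C (2 : ℚ) from (map_ofNat (MvPolynomial.C : ℚ →+* R) 2).symm]
      exact C_mul_mem _ (ih (p.2 + 1) (by omega) (Even.add_one hpe) (by omega))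
    · rw [if_neg hpe, mul_zero]
      exact zero_mem _

lemma qq_mem_Spow (m : ℕ) : ∀ k, k ≤ 2 * m - 1 → qq n k ∈ Algebra.adjoin ℚ (Spow n m) := by
  intro k
  induction k using Nat.strong_induction_on with
  | _ k ih =>
  intro hk
  rcases Nat.eq_zero_or_pos k with rfl | hpos
  · rw [qq_zero]; exact one_mem _
  obtain ⟨k', rfl⟩ : ∃ k', k = k' + 1 := ⟨k - 1, by omega⟩
  have hA := identity_A n k'
  have h1 : (C (((k' + 1 : ℕ) : ℚ)⁻¹) : R) * ((k' + 1 : ℕ) : R) = 1 := by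
    rw [← map_natCast (MvPolynomial.C : ℚ →+* R) (k' + 1), ← C_mul,
      inv_mul_cancel₀ (by positivity), C_1]
  have key : qq n (k' + 1) = C (((k' + 1 : ℕ) : ℚ)⁻¹) *
      (((k' + 1 : ℕ) : R) * qq n (k' + 1)) := by
    rw [← mul_assoc, h1, one_mul]
  rw [key, hA]
  apply C_mul_mem
  refine Subalgebra.sum_mem _ fun p hp => ?_
  rw [Finset.HasAntidiagonal.mem_antidiagonal] at hp
  refine mul_mem (ih p.1 (by omega) (by omega)) ?_
  by_cases hpe : Even p.2
  · rw [if_pos hpe]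
    rw [show (2 : R) = C (2 : ℚ) from (map_ofNat (MvPolynomial.C : ℚ →+* R) 2).symm]
    refine C_mul_mem _ (Algebra.subset_adjoin ?_)
    exact ⟨p.2 + 1, Even.add_one hpe, by omega, by omega, rfl⟩
  · rw [if_neg hpe]
    exact zero_mem _

theorem main (m : ℕ) (hm : 1 ≤ m) :
    Algebra.adjoin ℚ (SP n m) = Algebra.adjoin ℚ (Spow n m) := by
  apply le_antisymm
  · apply Algebra.adjoin_le
    rintro q ⟨k, hodd, h1, h2, rfl⟩
    exact C_mul_mem _ (qq_mem_Spow n m k h2)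
  · apply Algebra.adjoin_le
    rintro q ⟨k, hodd, h1, h2, rfl⟩
    exact psum_mem_SP n m k hodd h2



end nvars

end SchurPAux

/-- For every `m ≥ 1` and `n ≥ 1`, the `ℚ`-subalgebra of `MvPolynomial (Fin n) ℚ` generated by
the one-row Schur P-functions `P_1, P_3, …, P_{2m-1}`, where
`P_i = (1/2) * ∑_{j=0}^{i} e_j * h_{i-j}`, equals the `ℚ`-subalgebra generated by the odd power
sums `p_1, p_3, …, p_{2m-1}`. -/
theorem stmt_5 (m n : ℕ) (hm : 1 ≤ m) (hn : 1 ≤ n) :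
    Algebra.adjoin ℚ
      {q : MvPolynomial (Fin n) ℚ |
        ∃ k, Odd k ∧ 1 ≤ k ∧ k ≤ 2 * m - 1 ∧
          q = C (1/2 : ℚ) * ∑ j ∈ Finset.range (k + 1),
                esymm (Fin n) ℚ j * hsymm (Fin n) ℚ (k - j)} =
    Algebra.adjoin ℚ
      {q : MvPolynomial (Fin n) ℚ |
        ∃ k, Odd k ∧ 1 ≤ k ∧ k ≤ 2 * m - 1 ∧ q = psum (Fin n) ℚ k} := by
  exact SchurPAux.main n m hm
end
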